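/- arXiv:2205.09310 — 6 statements merged into one kernel-verified Lean document; each statement's English description precedes it below -/
import Mathlib

section
/- Let k be a positive integer, f : Fin k → ℝ a logit vector, and s > 1 a real scalar. If the index c maximizes f (i.e., f i ≤ f c for all i), then σ_c(s • f) ≥ σ_c(f), where σ_c denotes the softmax probability at index c. That is, increasing the magnitude of the logit vector does not decrease the softmax confidence score at the predicted class. -/
/-- If index `c` maximizes the logit vector `f`, then for any
scalar `s > 1`, the softmax probability at `c` of `s • f` is at least that of `f`. -/
theorem softmax_le_softmax_scaled (k : ℕ) (hk : 0 < k) (f : Fin k → ℝ)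
    (s : ℝ) (hs : 1 < s) (c : Fin k) (hc : ∀ i, f i ≤ f c) :
    Real.exp (f c) / ∑ i, Real.exp (f i) ≤
      Real.exp (s * f c) / ∑ i, Real.exp (s * f i) := by
  have h1 : (0:ℝ) < ∑ i, Real.exp (f i) :=
    Finset.sum_pos (fun i _ => Real.exp_pos _) (Finset.univ_nonempty_iff.2 ⟨c⟩)
  have h2 : (0:ℝ) < ∑ i, Real.exp (s * f i) :=
    Finset.sum_pos (fun i _ => Real.exp_pos _) (Finset.univ_nonempty_iff.2 ⟨c⟩)
  rw [div_le_div_iff₀ h1 h2, Finset.mul_sum, Finset.mul_sum]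
  apply Finset.sum_le_sum
  intro i _
  rw [← Real.exp_add, ← Real.exp_add, Real.exp_le_exp]
  nlinarith [hc i]
end

section
/- Let k be a positive integer, τ > 0 a real temperature parameter, f : Fin k → ℝ a nonzero logit vector with Euclidean norm ‖f‖ = sqrt(∑_i (f i)^2), and y : Fin k a label. Then the per-sample LogitNorm loss satisfies the lower bound L(f, y) = -log( exp(f y / (τ‖f‖)) / ∑_i exp(f i / (τ‖f‖)) ) ≥ log(1 + (k - 1) * exp(-2/τ)). -/
/-- Lower bound of the LogitNorm loss. -/
theorem logitNorm_loss_lower_bound (k : ℕ) (hk : 0 < k) (τ : ℝ) (hτ : 0 < τ)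
    (f : Fin k → ℝ) (hf : f ≠ 0) (y : Fin k) :
    Real.log (1 + (k - 1) * Real.exp (-2 / τ)) ≤
      -Real.log (Real.exp (f y / (τ * Real.sqrt (∑ i, (f i) ^ 2))) /
        ∑ i, Real.exp (f i / (τ * Real.sqrt (∑ j, (f j) ^ 2)))) := by
  set N := Real.sqrt (∑ i, (f i) ^ 2) with hNdef
  have hsum : 0 < ∑ i, (f i) ^ 2 := by
    obtain ⟨i, hi⟩ := Function.ne_iff.mp hf
    exact Finset.sum_pos' (fun j _ => sq_nonneg _)
      ⟨i, Finset.mem_univ _, pow_two_pos_of_ne_zero hi⟩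
  have hN : 0 < N := Real.sqrt_pos.mpr hsum
  have habs : ∀ i, |f i| ≤ N := by
    intro i
    rw [← Real.sqrt_sq_eq_abs]
    exact Real.sqrt_le_sqrt
      (Finset.single_le_sum (fun j _ => sq_nonneg (f j)) (Finset.mem_univ i))
  have hτN : 0 < τ * N := mul_pos hτ hN
  set S := ∑ i, Real.exp (f i / (τ * N)) with hSdef
  have hS : 0 < S := Finset.sum_pos (fun i _ => Real.exp_pos _) ⟨y, Finset.mem_univ y⟩
  rw [Real.log_div (Real.exp_ne_zero _) (ne_of_gt hS), Real.log_exp, neg_sub]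
  have hrw : Real.log S - f y / (τ * N) =
      Real.log (∑ i, Real.exp (f i / (τ * N) - f y / (τ * N))) := by
    rw [← Real.log_exp (f y / (τ * N)), ← Real.log_div (ne_of_gt hS) (Real.exp_ne_zero _),
      Real.log_exp]
    congr 1
    rw [Finset.sum_div]
    exact Finset.sum_congr rfl fun i _ => by rw [Real.exp_sub]
  rw [hrw]
  have hkey : ∀ i : Fin k, Real.exp (-2 / τ) ≤ Real.exp (f i / (τ * N) - f y / (τ * N)) := by
    intro i
    apply Real.exp_le_exp.mpr
    rw [div_sub_div_same, div_le_div_iff₀ hτ hτN]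
    have h1 := abs_le.mp (habs i)
    have h2 := abs_le.mp (habs y)
    nlinarith [hτ.le, hN.le]
  apply Real.log_le_log
  · have h1 : (1:ℝ) ≤ k := by exact_mod_cast hk
    have : (0:ℝ) ≤ (k - 1) * Real.exp (-2 / τ) := mul_nonneg (by linarith) (Real.exp_pos _).le
    linarith
  · rw [← Finset.add_sum_erase _ _ (Finset.mem_univ y)]
    have h1 : Real.exp (f y / (τ * N) - f y / (τ * N)) = 1 := by
      rw [sub_self, Real.exp_zero]
    have h2 : ((k:ℝ) - 1) * Real.exp (-2 / τ) ≤
        ∑ i ∈ Finset.univ.erase y, Real.exp (f i / (τ * N) - f y / (τ * N)) := by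
      have hcard : (Finset.univ.erase y).card = k - 1 := by
        rw [Finset.card_erase_of_mem (Finset.mem_univ y), Finset.card_univ, Fintype.card_fin]
      calc ((k:ℝ) - 1) * Real.exp (-2 / τ)
          = (Finset.univ.erase y).card • Real.exp (-2 / τ) := by
            rw [hcard, nsmul_eq_mul, Nat.cast_sub hk, Nat.cast_one]
        _ ≤ _ := Finset.card_nsmul_le_sum _ _ _ (fun i _ => hkey i)
    linarith [h1]
end

section
/- Let k be a positive integer, τ > 0 a real number, and g : Fin k → ℝ a vector whose Euclidean norm satisfies sqrt(∑_i (g i)^2) = 1/τ. Then every component is bounded: -1/τ ≤ g i ≤ 1/τ for all i, and consequently for every label y the cross-entropy loss of g satisfies -log( exp(g y) / ∑_i exp(g i) ) ≥ log(1 + (k - 1) * exp(-2/τ)). -/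
/-- If the Euclidean norm of `g` equals `1/τ`, then every
component is bounded in `[-1/τ, 1/τ]`, and the cross-entropy loss at every
label is at least `log(1 + (k-1) exp(-2/τ))`. -/
theorem component_bounds_and_loss_lower_bound_of_norm (k : ℕ) (hk : 0 < k)
    (τ : ℝ) (hτ : 0 < τ) (g : Fin k → ℝ)
    (hg : Real.sqrt (∑ i, (g i) ^ 2) = 1 / τ) :
    (∀ i, -1 / τ ≤ g i ∧ g i ≤ 1 / τ) ∧
    ∀ y : Fin k,
      Real.log (1 + (k - 1) * Real.exp (-2 / τ)) ≤
        -Real.log (Real.exp (g y) / ∑ i, Real.exp (g i)) := by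
  have habs : ∀ i, |g i| ≤ 1 / τ := by
    intro i
    have h1 : (g i) ^ 2 ≤ ∑ j, (g j) ^ 2 :=
      Finset.single_le_sum (fun j _ => sq_nonneg (g j)) (Finset.mem_univ i)
    calc |g i| = Real.sqrt ((g i) ^ 2) := (Real.sqrt_sq_eq_abs _).symm
      _ ≤ Real.sqrt (∑ j, (g j) ^ 2) := Real.sqrt_le_sqrt h1
      _ = 1 / τ := hg
  have hbounds : ∀ i, -1 / τ ≤ g i ∧ g i ≤ 1 / τ := by
    intro i
    have := abs_le.mp (habs i)
    have hd : (-1:ℝ) / τ = -(1 / τ) := neg_div _ _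
    exact ⟨hd ▸ this.1, this.2⟩
  refine ⟨hbounds, fun y => ?_⟩
  have hSpos : 0 < ∑ i, Real.exp (g i) :=
    Finset.sum_pos (fun i _ => Real.exp_pos _) (Finset.univ_nonempty_iff.mpr ⟨y⟩)
  have hrw : -Real.log (Real.exp (g y) / ∑ i, Real.exp (g i)) =
      Real.log (∑ i, Real.exp (g i - g y)) := by
    rw [Real.log_div (Real.exp_ne_zero _) (ne_of_gt hSpos)]
    rw [show (∑ i, Real.exp (g i - g y)) = (∑ i, Real.exp (g i)) / Real.exp (g y) by
      rw [Finset.sum_div]; exact Finset.sum_congr rfl fun i _ => (Real.exp_sub _ _)]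
    rw [Real.log_div (ne_of_gt hSpos) (Real.exp_ne_zero _), Real.log_exp]
    ring
  rw [hrw]
  have hterm : ∀ i, i ≠ y → Real.exp (-2 / τ) ≤ Real.exp (g i - g y) := by
    intro i _
    apply Real.exp_le_exp.mpr
    have h1 := (hbounds i).1
    have h2 := (hbounds y).2
    have : (-2 : ℝ) / τ = -1 / τ + (-(1 / τ)) := by ring
    linarith [this]
  have hsum : 1 + (k - 1 : ℝ) * Real.exp (-2 / τ) ≤ ∑ i, Real.exp (g i - g y) := by
    rw [← Finset.sum_erase_add _ _ (Finset.mem_univ y), sub_self, Real.exp_zero]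
    have hcard : ((Finset.univ.erase y).card : ℝ) = (k : ℝ) - 1 := by
      rw [Finset.card_erase_of_mem (Finset.mem_univ y)]
      simp [Nat.cast_sub hk]
    have h := Finset.card_nsmul_le_sum (Finset.univ.erase y)
      (fun i => Real.exp (g i - g y)) (Real.exp (-2 / τ))
      (fun i hi => hterm i (Finset.ne_of_mem_erase hi))
    rw [nsmul_eq_mul, hcard] at h
    linarith
  have hk1 : (0:ℝ) ≤ (k : ℝ) - 1 := by
    have : (1:ℝ) ≤ (k:ℝ) := by exact_mod_cast hk
    linarith
  have := mul_nonneg hk1 (Real.exp_pos (-2 / τ)).le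
  exact Real.log_le_log (by linarith) hsum
end

section
/- Let k be a positive integer, f : Fin k → ℝ a logit vector, and y an index that maximizes f (i.e., f i ≤ f y for all i). Then for every real scalar s > 1, the softmax cross-entropy loss does not increase under scaling: -log( exp(s * f y) / ∑_i exp(s * f i) ) ≤ -log( exp(f y) / ∑_i exp(f i) ). That is, for a training example that is already classified correctly, increasing the magnitude of the logit vector decreases (or keeps equal) the cross-entropy loss. -/
/-- If `y` maximizes `f`, then scaling by `s > 1` does not
increase the softmax cross-entropy loss at `y`. -/
theorem crossEntropy_nonincreasing_under_scaling (k : ℕ) (hk : 0 < k)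
    (f : Fin k → ℝ) (y : Fin k) (hy : ∀ i, f i ≤ f y) :
    ∀ s : ℝ, 1 < s →
      -Real.log (Real.exp (s * f y) / ∑ i, Real.exp (s * f i)) ≤
        -Real.log (Real.exp (f y) / ∑ i, Real.exp (f i)) := by
  intro s hs
  have h1 : 0 < ∑ i, Real.exp (f i) :=
    Finset.sum_pos (fun i _ => Real.exp_pos _) ⟨y, Finset.mem_univ y⟩
  have h2 : 0 < ∑ i, Real.exp (s * f i) :=
    Finset.sum_pos (fun i _ => Real.exp_pos _) ⟨y, Finset.mem_univ y⟩
  rw [Real.log_div (Real.exp_ne_zero _) (ne_of_gt h2),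
    Real.log_div (Real.exp_ne_zero _) (ne_of_gt h1), Real.log_exp, Real.log_exp]
  have key : ∑ i, Real.exp (s * f i) ≤ Real.exp ((s - 1) * f y) * ∑ i, Real.exp (f i) := by
    rw [Finset.mul_sum]
    apply Finset.sum_le_sum
    intro i _
    rw [← Real.exp_add]
    apply Real.exp_le_exp.mpr
    nlinarith [hy i]
  have hlog := Real.log_le_log h2 key
  rw [Real.log_mul (Real.exp_ne_zero _) (ne_of_gt h1), Real.log_exp] at hlog
  linarith
end

section
/- Let k be a positive integer, f : Fin k → ℝ a logit vector, and c an index that maximizes f (i.e., f i ≤ f c for all i). Then for all real scalars s₁, s₂ with 0 < s₁ ≤ s₂, the softmax probability at c is monotone in the scale: σ_c(s₁ • f) ≤ σ_c(s₂ • f), where σ_c(g) = exp(g c) / ∑_i exp(g i). -/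
/-- If `c` maximizes `f`, the softmax probability at `c` is
monotone in the positive scale. -/
theorem softmax_monotone_in_scale (k : ℕ) (hk : 0 < k) (f : Fin k → ℝ)
    (c : Fin k) (hc : ∀ i, f i ≤ f c) (s₁ s₂ : ℝ) (hs₁ : 0 < s₁)
    (hs : s₁ ≤ s₂) :
    Real.exp (s₁ * f c) / ∑ i, Real.exp (s₁ * f i) ≤
      Real.exp (s₂ * f c) / ∑ i, Real.exp (s₂ * f i) := by
  have key : ∀ s : ℝ, Real.exp (s * f c) / ∑ i, Real.exp (s * f i)
      = (∑ i, Real.exp (s * (f i - f c)))⁻¹ := by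
    intro s
    have hsum : (∑ i, Real.exp (s * f i))
        = (∑ i, Real.exp (s * (f i - f c))) * Real.exp (s * f c) := by
      rw [Finset.sum_mul]
      refine Finset.sum_congr rfl fun i _ => ?_
      rw [← Real.exp_add]; ring_nf
    rw [hsum, div_mul_eq_div_div_swap, div_self (Real.exp_ne_zero _), one_div]
  rw [key, key]
  have hpos : ∀ s : ℝ, 0 < ∑ i, Real.exp (s * (f i - f c)) := fun s =>
    Finset.sum_pos (fun i _ => Real.exp_pos _) (Finset.univ_nonempty_iff.2 ⟨⟨0, hk⟩⟩)
  refine inv_anti₀ (hpos _) ?_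
  refine Finset.sum_le_sum fun i _ => Real.exp_le_exp.2 ?_
  exact mul_le_mul_of_nonpos_right hs (by linarith [hc i])

example : True := trivial
end

section
/- Let k be a positive integer, f : Fin k → ℝ a logit vector, and c an index that maximizes f (i.e., f i ≤ f c for all i) and such that f is not constant at its maximum (i.e., there exists an index j with f j < f c). Then for every real scalar s > 1 the softmax probability at c strictly increases under scaling: σ_c(s • f) > σ_c(f), where σ_c(g) = exp(g c) / ∑_i exp(g i). -/
/-- If `c` maximizes `f` and `f` is not constant at its maximum,
then for every `s > 1` the softmax probability at `c` strictly increases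
under scaling by `s`. -/
theorem softmax_strict_increase_under_scaling (k : ℕ) (hk : 0 < k)
    (f : Fin k → ℝ) (c : Fin k) (hc : ∀ i, f i ≤ f c)
    (hne : ∃ j, f j < f c) (s : ℝ) (hs : 1 < s) :
    Real.exp (f c) / ∑ i, Real.exp (f i) <
      Real.exp (s * f c) / ∑ i, Real.exp (s * f i) := by
  have hpos1 : 0 < ∑ i, Real.exp (f i) :=
    Finset.sum_pos (fun i _ => Real.exp_pos _) ⟨c, Finset.mem_univ c⟩
  have hpos2 : 0 < ∑ i, Real.exp (s * f i) :=
    Finset.sum_pos (fun i _ => Real.exp_pos _) ⟨c, Finset.mem_univ c⟩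
  rw [div_lt_div_iff₀ hpos1 hpos2, Finset.mul_sum, Finset.mul_sum]
  obtain ⟨j, hj⟩ := hne
  apply Finset.sum_lt_sum
  · intro i _
    rw [← Real.exp_add, ← Real.exp_add]
    apply Real.exp_le_exp.mpr
    nlinarith [hc i]
  · exact ⟨j, Finset.mem_univ j, by
      rw [← Real.exp_add, ← Real.exp_add]
      apply Real.exp_lt_exp.mpr
      nlinarith⟩
end
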